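/- Let G be an (s,t)-layered graph, and let P be an s-to-t walk formed by concatenating: a forward path from s to some vertex β, a subpath of an oracle middle path P*_0 from β to α where d(s,α) < d(s,β), and a forward path from α to t, such that the three pieces are pairwise internally disjoint. If d(s,B) < d(s,α) and d(s,β) < d(s,A), where A, B are the endpoints of P*_0, then P is a simple s-to-t path with d(s,t) < w(P) < d(s,A) + w(P*_0) + d(s,t) − d(s,B). -/

import Mathlib

variable {V : Type*}

/-- Total weight of a walk given as a list of vertices. -/
def walkWt (w : V → V → ℝ) : List V → ℝ
  | [] => 0
  | [_] => 0
  | a :: b :: rest => w a b + walkWt w (b :: rest)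

/-- The list of (directed) edges traversed by a walk. -/
def listEdges : List V → List (V × V)
  | [] => []
  | [_] => []
  | a :: b :: rest => (a, b) :: listEdges (b :: rest)

/-- `l` is a walk from `u` to `v` in the digraph with edge relation `E`. -/
def IsWalkFrom (E : V → V → Prop) (u v : V) (l : List V) : Prop :=
  l.Chain' E ∧ l.head? = some u ∧ l.getLast? = some v

/-- `l` is a (simple) path from `u` to `v`. -/
def IsPathFrom (E : V → V → Prop) (u v : V) (l : List V) : Prop :=
  IsWalkFrom E u v l ∧ l.Nodup

/-- `d` is the shortest-path distance function of `(E, w)`: it lower-bounds the weight of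
every path, and is achieved by some path whenever some path exists. -/
def IsDistFn (E : V → V → Prop) (w : V → V → ℝ) (d : V → V → ℝ) : Prop :=
  (∀ u v l, IsPathFrom E u v l → d u v ≤ walkWt w l) ∧
  (∀ u v, (∃ l, IsPathFrom E u v l) → ∃ l, IsPathFrom E u v l ∧ walkWt w l = d u v)

/-- All edge weights are (strictly) positive. -/
def PosWeights (E : V → V → Prop) (w : V → V → ℝ) : Prop :=
  ∀ u v, E u v → 0 < w u v

/-- A back-edge relative to source `s`: `d(s,u) + w(u,v) > d(s,v)`. -/
def IsBackEdge (E : V → V → Prop) (w : V → V → ℝ) (d : V → V → ℝ) (s : V) (p : V × V) : Prop :=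
  E p.1 p.2 ∧ d s p.2 < d s p.1 + w p.1 p.2

/-- A forward-edge relative to source `s`: `d(s,u) + w(u,v) = d(s,v)`. -/
def IsForwardEdge (E : V → V → Prop) (w : V → V → ℝ) (d : V → V → ℝ) (s : V) (p : V × V) : Prop :=
  E p.1 p.2 ∧ d s p.1 + w p.1 p.2 = d s p.2

/-- A forward path: all its edges are forward-edges. -/
def IsForwardPath (E : V → V → Prop) (w : V → V → ℝ) (d : V → V → ℝ) (s : V) (l : List V) : Prop :=
  ∀ p ∈ listEdges l, IsForwardEdge E w d s p

/-- `(s,t)`-straight graph: every vertex lies on a shortest `s → t` path. -/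
def IsStraight (E : V → V → Prop) (w : V → V → ℝ) (d : V → V → ℝ) (s t : V) : Prop :=
  (∀ u, d s u + d u t = d s t) ∧
  (∀ u, ∃ l, IsPathFrom E s t l ∧ u ∈ l ∧ walkWt w l = d s t)

/-- `(s,t)`-layered graph. -/
def IsLayered (E : V → V → Prop) (w : V → V → ℝ) (d : V → V → ℝ) (s t : V) : Prop :=
  IsStraight E w d s t ∧
  (∀ u v, E u v → d s u ≠ d s v) ∧
  (∀ u v, E u v → d s u < d s v → ∀ x, d s x ≤ d s u ∨ d s u + w u v ≤ d s x)

/-- The layer of `u`: the rank of `d(s,u)` among the distinct values of `d(s,·)`. -/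
noncomputable def layer [Fintype V] (d : V → V → ℝ) (s : V) (u : V) : ℕ :=
  ((Finset.univ.image (fun x : V => d s x)).filter (fun p => p ≤ d s u)).card

/-- An `s → t` not-shortest path. -/
def IsNotShortest (E : V → V → Prop) (w : V → V → ℝ) (d : V → V → ℝ) (s t : V)
    (l : List V) : Prop :=
  IsPathFrom E s t l ∧ d s t < walkWt w l

/-- An `s → t` next-to-shortest path: a not-shortest path of minimum weight. -/
def IsNextToShortest (E : V → V → Prop) (w : V → V → ℝ) (d : V → V → ℝ) (s t : V)
    (l : List V) : Prop :=
  IsNotShortest E w d s t l ∧ ∀ l', IsNotShortest E w d s t l' → walkWt w l ≤ walkWt w l'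

/-- Back-edge decomposition of a path `l = l1 ∘ l0 ∘ l2`, where `l0` runs from `A` to `B`,
starting with the first back-edge of `l` and ending with the last one. -/
def IsBEDecomp (E : V → V → Prop) (w : V → V → ℝ) (d : V → V → ℝ) (s t : V)
    (l l1 l0 l2 : List V) (A B : V) : Prop :=
  IsPathFrom E s A l1 ∧ IsPathFrom E A B l0 ∧ IsPathFrom E B t l2 ∧
  l = l1 ++ l0.tail ++ l2.tail ∧
  (∀ p ∈ listEdges l1, ¬ IsBackEdge E w d s p) ∧
  (∀ p ∈ listEdges l2, ¬ IsBackEdge E w d s p) ∧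
  (∃ p, (listEdges l0).head? = some p ∧ IsBackEdge E w d s p) ∧
  (∃ p, (listEdges l0).getLast? = some p ∧ IsBackEdge E w d s p)


section Stmt15Aux

variable {E : V → V → Prop} {w d : V → V → ℝ}

lemma walkWt_cons_cons (a b : V) (r : List V) :
    walkWt w (a :: b :: r) = w a b + walkWt w (b :: r) := rfl

lemma listEdges_cons_cons (a b : V) (r : List V) :
    listEdges (a :: b :: r) = (a, b) :: listEdges (b :: r) := rfl

lemma walkWt_nonneg (hpos : PosWeights E w) :
    ∀ l : List V, l.Chain' E → 0 ≤ walkWt w l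
  | [], _ => le_refl 0
  | [_], _ => le_refl 0
  | a :: b :: r, h => by
      have h1 : E a b := (List.isChain_cons_cons.mp h).1
      have h2 := (List.isChain_cons_cons.mp h).2
      have h3 := walkWt_nonneg hpos (b :: r) h2
      have h4 := hpos a b h1
      rw [walkWt_cons_cons]; linarith

lemma walkWt_glue {x : V} :
    ∀ (l1 l2 : List V), l1.getLast? = some x → l2.head? = some x →
      walkWt w (l1 ++ l2.tail) = walkWt w l1 + walkWt w l2
  | [], l2, h1, _ => by simp at h1
  | [a], l2, h1, h2 => by
      simp at h1
      rcases l2 with _ | ⟨c, r⟩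
      · simp at h2
      · simp at h2
        subst h1; subst h2
        simp [walkWt]
  | a :: b :: r, l2, h1, h2 => by
      rw [List.getLast?_cons_cons] at h1
      have ih := walkWt_glue (b :: r) l2 h1 h2
      rw [List.cons_append, List.cons_append, walkWt_cons_cons,
        ← List.cons_append, ih, walkWt_cons_cons]
      ring

lemma getLast?_glue {x v : V} {l1 l2 : List V} (h1 : l1.getLast? = some x)
    (h2 : l2.head? = some x) (h3 : l2.getLast? = some v) :
    (l1 ++ l2.tail).getLast? = some v := by
  rcases l2 with _ | ⟨a, r⟩
  · simp at h2
  · simp at h2; subst h2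
    rcases r with _ | ⟨b, r⟩
    · simp at h3; subst h3; simpa using h1
    · rw [List.tail_cons, List.getLast?_append_of_ne_nil _ (by simp)]
      rw [List.getLast?_cons_cons] at h3; exact h3

lemma chain'_glue {x : V} {l1 l2 : List V} (h1 : l1.getLast? = some x)
    (h2 : l2.head? = some x) (c1 : l1.Chain' E) (c2 : l2.Chain' E) :
    (l1 ++ l2.tail).Chain' E := by
  rcases l2 with _ | ⟨a, r⟩
  · simp at h2
  · simp at h2; subst h2
    rw [List.tail_cons]; unfold List.Chain'; rw [List.isChain_append]
    refine ⟨c1, (List.isChain_cons.mp c2).2, ?_⟩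
    intro y hy z hz
    rw [h1, Option.mem_some_iff] at hy
    subst hy
    exact (List.isChain_cons.mp c2).1 z hz

lemma walkWt_forward {s : V} :
    ∀ l : List V, IsForwardPath E w d s l → ∀ u v, l.head? = some u →
      l.getLast? = some v → walkWt w l = d s v - d s u
  | [], _, u, v, h1, _ => by simp at h1
  | [a], _, u, v, h1, h2 => by
      simp at h1 h2; subst h1; subst h2; simp [walkWt]
  | a :: b :: r, hf, u, v, h1, h2 => by
      have h1' : a = u := by simpa using h1
      subst h1'
      rw [List.getLast?_cons_cons] at h2
      have hab : IsForwardEdge E w d s (a, b) :=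
        hf (a, b) (by rw [listEdges_cons_cons]; exact List.mem_cons_self)
      have hf' : IsForwardPath E w d s (b :: r) := by
        intro p hp
        exact hf p (by rw [listEdges_cons_cons]; exact List.mem_cons_of_mem _ hp)
      have ih := walkWt_forward (b :: r) hf' b v rfl h2
      have hthis : d s a + w a b = d s b := hab.2
      rw [walkWt_cons_cons, ih]
      linarith

lemma walkWt_tail_le (hpos : PosWeights E w) (a : V) (l : List V)
    (h : (a :: l).Chain' E) : walkWt w l ≤ walkWt w (a :: l) := by
  rcases l with _ | ⟨b, r⟩
  · simp [walkWt]
  · have h1 : E a b := (List.isChain_cons_cons.mp h).1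
    have := hpos a b h1
    rw [walkWt_cons_cons]; linarith

lemma walkWt_suffix_le (hpos : PosWeights E w) :
    ∀ (p l : List V), (p ++ l).Chain' E → walkWt w l ≤ walkWt w (p ++ l)
  | [], l, h => le_refl _
  | a :: p, l, h => by
      have h2 : (p ++ l).Chain' E := (List.isChain_cons.mp h).2
      have ih := walkWt_suffix_le hpos p l h2
      have := walkWt_tail_le hpos a (p ++ l) h
      rw [List.cons_append]
      linarith

lemma walkWt_prefix_le (hpos : PosWeights E w) :
    ∀ (l q : List V), (l ++ q).Chain' E → walkWt w l ≤ walkWt w (l ++ q)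
  | [], q, h => walkWt_nonneg hpos q h
  | [a], q, h => by
      simpa [walkWt] using walkWt_nonneg hpos (a :: q) h
  | a :: b :: r, q, h => by
      have h' : List.Chain' E (a :: b :: (r ++ q)) := by simpa using h
      have h2 := (List.isChain_cons_cons.mp h').2
      have ih := walkWt_prefix_le hpos (b :: r) q h2
      have e1 : (a :: b :: r) ++ q = a :: b :: (r ++ q) := by simp
      have e2 : (b :: r) ++ q = b :: (r ++ q) := by simp
      rw [e1, walkWt_cons_cons, walkWt_cons_cons]
      rw [e2] at ih
      linarith

lemma path_split {s t u : V} {l : List V} (h : IsPathFrom E s t l) (hu : u ∈ l) :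
    ∃ p q, l = (p ++ [u]) ++ q ∧ IsPathFrom E s u (p ++ [u]) ∧ (u :: q).Chain' E ∧
      walkWt w l = walkWt w (p ++ [u]) + walkWt w (u :: q) := by
  obtain ⟨p, q, rfl⟩ := List.append_of_mem hu
  refine ⟨p, q, by simp, ?_, ?_, ?_⟩
  · refine ⟨⟨?_, ?_, ?_⟩, ?_⟩
    · have := h.1.1
      exact this.prefix ⟨q, by simp⟩
    · have := h.1.2.1
      rcases p with _ | ⟨a, p⟩ <;> simpa using this
    · simp
    · exact h.2.sublist (by simp)
  · have := h.1.1
    exact this.suffix ⟨p, rfl⟩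
  · have hg : walkWt w ((p ++ [u]) ++ (u :: q).tail) =
        walkWt w (p ++ [u]) + walkWt w (u :: q) :=
      walkWt_glue _ _ (by simp) rfl
    simpa using hg

lemma d_nonneg {s t : V} (hpos : PosWeights E w) (hd : IsDistFn E w d)
    (hstraight : IsStraight E w d s t) (u : V) : 0 ≤ d s u := by
  obtain ⟨l, hl, hul, _⟩ := hstraight.2 u
  obtain ⟨p, q, _, hp, _, _⟩ := path_split (w := w) hl hul
  obtain ⟨l', hl', hw⟩ := hd.2 s u ⟨_, hp⟩
  rw [← hw]
  exact walkWt_nonneg hpos l' hl'.1.1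

lemma d_le_dt {s t : V} (hpos : PosWeights E w) (hd : IsDistFn E w d)
    (hstraight : IsStraight E w d s t) (u : V) : d s u ≤ d s t := by
  obtain ⟨l, hl, hul, hwl⟩ := hstraight.2 u
  obtain ⟨p, q, _, hp, hq, hsum⟩ := path_split (w := w) hl hul
  have h1 : d s u ≤ walkWt w (p ++ [u]) := hd.1 s u _ hp
  have h2 : 0 ≤ walkWt w (u :: q) := walkWt_nonneg hpos _ hq
  linarith [hwl ▸ hsum]

lemma d_self {s t : V} (hpos : PosWeights E w) (hd : IsDistFn E w d)
    (hstraight : IsStraight E w d s t) : d s s = 0 := by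
  have hpath : IsPathFrom E s s [s] := ⟨⟨List.isChain_singleton _, rfl, rfl⟩, by simp⟩
  have h1 : d s s ≤ walkWt w [s] := hd.1 s s [s] hpath
  have h2 : 0 ≤ d s s := d_nonneg hpos hd hstraight s
  simp [walkWt] at h1
  linarith

end Stmt15Aux

/-- stitching a forward path `s → β`, a `β → α` subpath of an oracle middle
path `l0` (with `d(s,α) < d(s,β)`), and a forward path `α → t`, internally disjoint, gives a
simple `s → t` path `P` with `d(s,t) < w(P) < d(s,A) + w(l0) + d(s,t) − d(s,B)`. -/
theorem stmt15 (E : V → V → Prop) (w d : V → V → ℝ) (s t A B α β : V)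
    (l0 mid F1 F2 : List V)
    (hpos : PosWeights E w) (hd : IsDistFn E w d)
    (hL : IsLayered E w d s t)
    (horacle : ∃ l1 l2, IsNextToShortest E w d s t (l1 ++ l0.tail ++ l2.tail) ∧
      IsBEDecomp E w d s t (l1 ++ l0.tail ++ l2.tail) l1 l0 l2 A B)
    (hmid : mid <:+: l0) (hmidh : mid.head? = some β) (hmidl : mid.getLast? = some α)
    (hF1 : IsPathFrom E s β F1) (hF1f : IsForwardPath E w d s F1)
    (hF2 : IsPathFrom E α t F2) (hF2f : IsForwardPath E w d s F2)
    (hint1 : ∀ x, x ∈ F1 → x ∈ mid → x = β)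
    (hint2 : ∀ x, x ∈ mid → x ∈ F2 → x = α)
    (hint3 : ∀ x, x ∈ F1 → x ∈ F2 → False)
    (hαβ : d s α < d s β) (hBα : d s B < d s α) (hβA : d s β < d s A) :
    IsPathFrom E s t (F1 ++ mid.tail ++ F2.tail) ∧
    d s t < walkWt w (F1 ++ mid.tail ++ F2.tail) ∧
    walkWt w (F1 ++ mid.tail ++ F2.tail) < d s A + walkWt w l0 + d s t - d s B := by
  obtain ⟨L1, L2, _, hbe⟩ := horacle
  have hl0path : IsPathFrom E A B l0 := hbe.2.1
  have hl0chain : l0.Chain' E := hl0path.1.1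
  have hl0nodup : l0.Nodup := hl0path.2
  have hmidchain : mid.Chain' E := hl0chain.infix hmid
  have hmidnodup : mid.Nodup := hl0nodup.sublist hmid.sublist
  have hstraight := hL.1
  have hdss : d s s = 0 := d_self hpos hd hstraight
  -- weight of the glued walk
  have hF1last : F1.getLast? = some β := hF1.1.2.2
  have hF2head : F2.head? = some α := hF2.1.2.1
  have hchain1 : (F1 ++ mid.tail).Chain' E :=
    chain'_glue hF1last hmidh hF1.1.1 hmidchain
  have hlast1 : (F1 ++ mid.tail).getLast? = some α :=
    getLast?_glue hF1last hmidh hmidl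
  have hchain : (F1 ++ mid.tail ++ F2.tail).Chain' E :=
    chain'_glue hlast1 hF2head hchain1 hF2.1.1
  have hlast : (F1 ++ mid.tail ++ F2.tail).getLast? = some t :=
    getLast?_glue hlast1 hF2head hF2.1.2.2
  have hw1 : walkWt w (F1 ++ mid.tail) = walkWt w F1 + walkWt w mid :=
    walkWt_glue _ _ hF1last hmidh
  have hw : walkWt w (F1 ++ mid.tail ++ F2.tail)
      = walkWt w F1 + walkWt w mid + walkWt w F2 := by
    rw [walkWt_glue _ _ hlast1 hF2head, hw1]
  have hwF1 : walkWt w F1 = d s β - d s s :=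
    walkWt_forward F1 hF1f s β hF1.1.2.1 hF1last
  have hwF2 : walkWt w F2 = d s t - d s α :=
    walkWt_forward F2 hF2f α t hF2head hF2.1.2.2
  have hmid0 : 0 ≤ walkWt w mid := walkWt_nonneg hpos mid hmidchain
  have hmidle : walkWt w mid ≤ walkWt w l0 := by
    obtain ⟨p, q, rfl⟩ := hmid
    have hc : (p ++ (mid ++ q)).Chain' E := by simpa [List.append_assoc] using hl0chain
    have h1 := walkWt_suffix_le hpos p (mid ++ q) hc
    have h2 := walkWt_prefix_le hpos mid q (hl0chain.suffix ⟨p, by simp⟩)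
    calc walkWt w mid ≤ walkWt w (mid ++ q) := h2
      _ ≤ walkWt w (p ++ (mid ++ q)) := h1
      _ = walkWt w (p ++ mid ++ q) := by rw [List.append_assoc]
  -- nonemptiness structure
  obtain ⟨f1, rfl⟩ : ∃ f1, F1 = s :: f1 := by
    rcases F1 with _ | ⟨a, f⟩
    · exact absurd hF1.1.2.1 (by simp)
    · have ha : a = s := by simpa using hF1.1.2.1
      exact ⟨f, by rw [ha]⟩
  obtain ⟨mt, rfl⟩ : ∃ mt, mid = β :: mt := by
    rcases mid with _ | ⟨a, f⟩
    · exact absurd hmidh (by simp)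
    · have ha : a = β := by simpa using hmidh
      exact ⟨f, by rw [ha]⟩
  obtain ⟨f2, rfl⟩ : ∃ f2, F2 = α :: f2 := by
    rcases F2 with _ | ⟨a, f⟩
    · exact absurd hF2head (by simp)
    · have ha : a = α := by simpa using hF2head
      exact ⟨f, by rw [ha]⟩
  have hhead : ((s :: f1) ++ (β :: mt).tail ++ (α :: f2).tail).head? = some s := by simp
  -- nodup
  have hβmt : β ∉ mt := (List.nodup_cons.mp hmidnodup).1
  have hαf2 : α ∉ f2 := (List.nodup_cons.mp hF2.2).1
  have hnodup : ((s :: f1) ++ (β :: mt).tail ++ (α :: f2).tail).Nodup := by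
    rw [List.nodup_append, List.nodup_append]
    refine ⟨⟨hF1.2, (List.nodup_cons.mp hmidnodup).2, ?_⟩,
      (List.nodup_cons.mp hF2.2).2, ?_⟩
    · intro x hx1 y hx2 hxy
      subst hxy
      have hxm : x ∈ β :: mt := List.mem_cons_of_mem _ hx2
      have := hint1 x hx1 hxm
      subst this
      exact hβmt hx2
    · intro x hx y hx2 hxy
      subst hxy
      rcases List.mem_append.mp hx with hx1 | hx1
      · exact hint3 x hx1 (List.mem_cons_of_mem _ hx2)
      · have hxm : x ∈ β :: mt := List.mem_cons_of_mem _ hx1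
        have := hint2 x hxm (List.mem_cons_of_mem _ hx2)
        subst this
        exact hαf2 hx2
  refine ⟨⟨⟨hchain, hhead, hlast⟩, hnodup⟩, ?_, ?_⟩ <;>
    rw [hw, hwF1, hwF2] <;> linarith
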